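/- Let X be a real Banach space and let x₀* ∈ S_{X*} be a w*-Δ-point. Then for every x₀ ∈ S_X and α > 0 with x₀* ∈ S(x₀, α) there exist a sequence (x_i*)_{i≥1} in S(x₀, α) and a sequence (x_i)_{i≥1} in S_X such that x₀*(x_i) > 1 − 1/i for every i ∈ ℕ, and, writing x_0 := x₀ and x_0* := x₀*, one has ‖x_i* − x_j*‖ ≥ 2 − α and ‖x_i − x_j‖ ≥ 2 − α for all i, j ∈ ℕ ∪ {0} with i ≠ j. -/

import Mathlib

open Metric Set Filter NNReal

noncomputable section

/-- The topological dual of a seminormed space (Mathlib's former `NormedSpace.Dual`). -/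
abbrev NormedSpace.Dual (𝕜 : Type*) [NontriviallyNormedField 𝕜] (E : Type*) [SeminormedAddCommGroup E]
    [NormedSpace 𝕜 E] : Type _ :=
  E →L[𝕜] 𝕜

namespace DeltaPaper

/-! ### Generic Banach space notions -/

variable {X : Type*} [NormedAddCommGroup X] [NormedSpace ℝ X]

/-- `x` is a Daugavet-point: every slice of the unit ball contains, for every `ε > 0`,
an element at distance at least `2 - ε` from `x`. -/
def IsDaugavetPoint (x : X) : Prop :=
  ∀ (φ : NormedSpace.Dual ℝ X) (α : ℝ), ‖φ‖ = 1 → 0 < α → ∀ ε > 0,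
    ∃ y : X, ‖y‖ ≤ 1 ∧ 1 - α < φ y ∧ 2 - ε ≤ ‖x - y‖

/-- `x` is a Δ-point: every slice of the unit ball containing `x` contains, for every
`ε > 0`, an element at distance at least `2 - ε` from `x`. -/
def IsDeltaPoint (x : X) : Prop :=
  ∀ (φ : NormedSpace.Dual ℝ X) (α : ℝ), ‖φ‖ = 1 → 0 < α → 1 - α < φ x → ∀ ε > 0,
    ∃ y : X, ‖y‖ ≤ 1 ∧ 1 - α < φ y ∧ 2 - ε ≤ ‖x - y‖

/-- `x*` is a w*-Daugavet-point of the dual of `X`. -/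
def IsWeakStarDaugavetPoint (f : NormedSpace.Dual ℝ X) : Prop :=
  ∀ (x : X) (α : ℝ), ‖x‖ = 1 → 0 < α → ∀ ε > 0,
    ∃ g : NormedSpace.Dual ℝ X, ‖g‖ ≤ 1 ∧ 1 - α < g x ∧ 2 - ε ≤ ‖f - g‖

/-- `x*` is a w*-Δ-point of the dual of `X`. -/
def IsWeakStarDeltaPoint (f : NormedSpace.Dual ℝ X) : Prop :=
  ∀ (x : X) (α : ℝ), ‖x‖ = 1 → 0 < α → 1 - α < f x → ∀ ε > 0,
    ∃ g : NormedSpace.Dual ℝ X, ‖g‖ ≤ 1 ∧ 1 - α < g x ∧ 2 - ε ≤ ‖f - g‖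

/-- `x` is a denting point of the unit ball: it lies in slices of the unit ball of
arbitrarily small diameter. -/
def IsDentingPoint (x : X) : Prop :=
  ‖x‖ ≤ 1 ∧ ∀ ε > 0, ∃ (φ : NormedSpace.Dual ℝ X) (α : ℝ), ‖φ‖ = 1 ∧ 0 < α ∧
    1 - α < φ x ∧ Metric.diam {y : X | ‖y‖ ≤ 1 ∧ 1 - α < φ y} < ε

/-- The Kuratowski measure of non-compactness of a set: the infimum of all `ε > 0`
such that the set can be covered by finitely many sets of diameter less than `ε`. -/
def kuratowski {Y : Type*} [PseudoMetricSpace Y] (A : Set Y) : ℝ :=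
  sInf {ε : ℝ | 0 < ε ∧ ∃ 𝒞 : Finset (Set Y), (A ⊆ ⋃ B ∈ 𝒞, B) ∧ ∀ B ∈ 𝒞, Metric.diam B < ε}

/-! ### The space of Lipschitz functions vanishing at a base point -/

variable {M : Type*} [PseudoMetricSpace M]

/-- The least Lipschitz constant of a function. -/
def lipConst (f : M → ℝ) : ℝ≥0 := sInf {K | LipschitzWith K f}

theorem lipschitzWith_lipConst {f : M → ℝ} (hf : ∃ K, LipschitzWith K f) :
    LipschitzWith (lipConst f) f := by
  obtain ⟨K₀, hK₀⟩ := hf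
  rw [lipschitzWith_iff_dist_le_mul]
  intro x y
  rcases le_or_gt (dist x y) 0 with h | h
  · have h0 : dist x y = 0 := le_antisymm h dist_nonneg
    have := hK₀.dist_le_mul x y
    rw [h0, mul_zero] at this ⊢
    exact this
  · rw [← div_le_iff₀ h]
    have hnn : 0 ≤ dist (f x) (f y) / dist x y := by positivity
    rw [← Real.coe_toNNReal _ hnn, NNReal.coe_le_coe]
    refine le_csInf ⟨K₀, hK₀⟩ ?_
    intro K hK
    rw [← NNReal.coe_le_coe, Real.coe_toNNReal _ hnn, div_le_iff₀ h]
    exact hK.dist_le_mul x y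

theorem lipConst_le {f : M → ℝ} {K : ℝ≥0} (hK : LipschitzWith K f) : lipConst f ≤ K :=
  csInf_le (OrderBot.bddBelow _) hK

theorem lipschitzWith_smul {f : M → ℝ} {K : ℝ≥0} (hK : LipschitzWith K f) (c : ℝ) :
    LipschitzWith (‖c‖₊ * K) (c • f) := by
  rw [lipschitzWith_iff_dist_le_mul] at *
  intro x y
  have : dist ((c • f) x) ((c • f) y) = ‖c‖ * dist (f x) (f y) := by
    simp only [Pi.smul_apply, smul_eq_mul, Real.dist_eq, ← mul_sub, abs_mul, Real.norm_eq_abs]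
  rw [this, NNReal.coe_mul, coe_nnnorm, mul_assoc]
  exact mul_le_mul_of_nonneg_left (hK x y) (norm_nonneg c)

variable (M) in
/-- The submodule of `M → ℝ` consisting of Lipschitz functions vanishing at the
base point `z`. -/
def Lip0 (z : M) : Submodule ℝ (M → ℝ) where
  carrier := {f | (∃ K, LipschitzWith K f) ∧ f z = 0}
  add_mem' := by
    rintro f g ⟨⟨K, hK⟩, hf0⟩ ⟨⟨L, hL⟩, hg0⟩
    exact ⟨⟨K + L, hK.add hL⟩, by simp [hf0, hg0]⟩
  zero_mem' := ⟨⟨0, LipschitzWith.const' 0⟩, rfl⟩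
  smul_mem' := by
    rintro c f ⟨⟨K, hK⟩, hf0⟩
    exact ⟨⟨‖c‖₊ * K, lipschitzWith_smul hK c⟩, by simp [hf0]⟩

variable {z : M}

instance : NormedAddCommGroup ↥(Lip0 M z) :=
  AddGroupNorm.toNormedAddCommGroup
    { toFun := fun f => ((lipConst (f : M → ℝ) : ℝ≥0) : ℝ)
      map_zero' := by
        have h0 : lipConst (0 : M → ℝ) = 0 :=
          le_antisymm (lipConst_le (by simpa using LipschitzWith.const' (0 : ℝ))) bot_le
        show ((lipConst ((0 : ↥(Lip0 M z)) : M → ℝ) : ℝ≥0) : ℝ) = 0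
        rw [show ((0 : ↥(Lip0 M z)) : M → ℝ) = 0 from rfl, h0, NNReal.coe_zero]
      add_le' := by
        intro f g
        have hf := lipschitzWith_lipConst f.2.1
        have hg := lipschitzWith_lipConst g.2.1
        have : lipConst ((f + g : ↥(Lip0 M z)) : M → ℝ) ≤
            lipConst (f : M → ℝ) + lipConst (g : M → ℝ) := by
          refine lipConst_le ?_
          have := hf.add hg
          convert this using 1 <;> rfl
        exact_mod_cast this
      neg' := by
        intro f
        show ((lipConst ((-f : ↥(Lip0 M z)) : M → ℝ) : ℝ≥0) : ℝ) = _
        rw [show ((-f : ↥(Lip0 M z)) : M → ℝ) = -(f : M → ℝ) from rfl]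
        unfold lipConst
        congr 2
        ext K
        exact ⟨fun hK => by simpa using hK.neg, fun hK => hK.neg⟩
      eq_zero_of_map_eq_zero' := by
        intro f hf
        replace hf : ((lipConst (f : M → ℝ) : ℝ≥0) : ℝ) = 0 := hf
        have h0 : lipConst (f : M → ℝ) = 0 := by exact_mod_cast hf
        have hl : LipschitzWith 0 (f : M → ℝ) := h0 ▸ lipschitzWith_lipConst f.2.1
        ext x
        have := hl.dist_le_mul x z
        simp only [NNReal.coe_zero, zero_mul] at this
        have hxz : (f : M → ℝ) x = (f : M → ℝ) z :=
          dist_le_zero.mp this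
        simpa [f.2.2] using hxz }

theorem Lip0.norm_def (f : ↥(Lip0 M z)) : ‖f‖ = ((lipConst (f : M → ℝ) : ℝ≥0) : ℝ) := rfl

theorem Lip0.lipschitzWith (f : ↥(Lip0 M z)) : LipschitzWith (lipConst (f : M → ℝ)) (f : M → ℝ) :=
  lipschitzWith_lipConst f.2.1

instance : NormedSpace ℝ ↥(Lip0 M z) where
  norm_smul_le c f := by
    have : lipConst ((c • f : ↥(Lip0 M z)) : M → ℝ) ≤ ‖c‖₊ * lipConst (f : M → ℝ) :=
      lipConst_le (lipschitzWith_smul (Lip0.lipschitzWith f) c)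
    calc ‖c • f‖ = ((lipConst ((c • f : ↥(Lip0 M z)) : M → ℝ) : ℝ≥0) : ℝ) := rfl
      _ ≤ ((‖c‖₊ * lipConst (f : M → ℝ) : ℝ≥0) : ℝ) := by exact_mod_cast this
      _ = ‖c‖ * ‖f‖ := by push_cast [Lip0.norm_def]; rfl

variable (M z) in
/-- The evaluation functional `δ_x ∈ Lip₀(M)*`. -/
def evalδ (x : M) : NormedSpace.Dual ℝ ↥(Lip0 M z) :=
  LinearMap.mkContinuous
    { toFun := fun f => (f : M → ℝ) x
      map_add' := fun f g => rfl
      map_smul' := fun c f => rfl }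
    (dist x z)
    (by
      intro f
      have := (Lip0.lipschitzWith f).dist_le_mul x z
      simp only [f.2.2, Real.dist_eq, sub_zero] at this
      calc ‖(f : M → ℝ) x‖ = |(f : M → ℝ) x - 0| := by simp
        _ ≤ (lipConst (f : M → ℝ) : ℝ) * dist x z := by
            simpa [f.2.2, Real.dist_eq] using (Lip0.lipschitzWith f).dist_le_mul x z
        _ = dist x z * ‖f‖ := by rw [Lip0.norm_def, mul_comm])

variable (M z) in
/-- The Lipschitz-free space over `M`: the closed linear span of the evaluation
functionals inside `Lip₀(M)*`. -/
def FreeSpace : Submodule ℝ (NormedSpace.Dual ℝ ↥(Lip0 M z)) :=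
  (Submodule.span ℝ (Set.range (evalδ M z))).topologicalClosure

variable (M z) in
/-- The molecule `m_{x y} = (δ_x - δ_y)/d(x,y)` as an element of `Lip₀(M)*`. -/
def molecule (x y : M) : NormedSpace.Dual ℝ ↥(Lip0 M z) :=
  (dist x y)⁻¹ • (evalδ M z x - evalδ M z y)

theorem molecule_mem_freeSpace (x y : M) : molecule M z x y ∈ FreeSpace M z :=
  Submodule.le_topologicalClosure _
    (Submodule.smul_mem _ _ (Submodule.sub_mem _
      (Submodule.subset_span ⟨x, rfl⟩) (Submodule.subset_span ⟨y, rfl⟩)))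

variable (M z) in
/-- The molecule `m_{x y}` as an element of the free space `F(M)`. -/
def mol (x y : M) : ↥(FreeSpace M z) := ⟨molecule M z x y, molecule_mem_freeSpace x y⟩

variable (M) in
/-- A metric space is uniformly discrete if distances between distinct points are
bounded below by a positive constant. -/
def UniformlyDiscrete : Prop := ∃ θ > (0:ℝ), ∀ x y : M, x ≠ y → θ ≤ dist x y

/-- A norm-one Lipschitz function is local if its Lipschitz constant is approximated
on pairs of arbitrarily close points. -/
def IsLocal (f : ↥(Lip0 M z)) : Prop :=
  ∀ ε > 0, ∃ u v : M, u ≠ v ∧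
    ‖f‖ - ε < ((f : M → ℝ) u - (f : M → ℝ) v) / dist u v ∧ dist u v < ε

/-- `f ∈ S_{Lip₀(M)}` is a w*-Daugavet-point: for every w*-slice `S(μ, α)` of
`B_{Lip₀(M)}` (`μ` a norm-one element of `F(M)`) and every `ε > 0` there is `g` in the
slice with `‖f - g‖ ≥ 2 - ε`. -/
def IsLipWeakStarDaugavetPoint (f : ↥(Lip0 M z)) : Prop :=
  ∀ μ : NormedSpace.Dual ℝ ↥(Lip0 M z), μ ∈ FreeSpace M z → ‖μ‖ = 1 → ∀ α > (0:ℝ), ∀ ε > (0:ℝ),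
    ∃ g : ↥(Lip0 M z), ‖g‖ ≤ 1 ∧ 1 - α < μ g ∧ 2 - ε ≤ ‖f - g‖

/-- `f ∈ S_{Lip₀(M)}` is a w*-Δ-point: the same as above, but only for w*-slices
containing `f`. -/
def IsLipWeakStarDeltaPoint (f : ↥(Lip0 M z)) : Prop :=
  ∀ μ : NormedSpace.Dual ℝ ↥(Lip0 M z), μ ∈ FreeSpace M z → ‖μ‖ = 1 → ∀ α > (0:ℝ),
    1 - α < μ f → ∀ ε > (0:ℝ),
    ∃ g : ↥(Lip0 M z), ‖g‖ ≤ 1 ∧ 1 - α < μ g ∧ 2 - ε ≤ ‖f - g‖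

end DeltaPaper

open DeltaPaper NormedSpace


namespace Statement2Aux

variable {X : Type*} [NormedAddCommGroup X] [NormedSpace ℝ X]

/-- bounds of a functional of norm ≤ 1 on a vector of norm ≤ 1 -/
lemma dual_bound (g : Dual ℝ X) (hg : ‖g‖ ≤ 1) (w : X) (hw : ‖w‖ ≤ 1) :
    -1 ≤ g w ∧ g w ≤ 1 := by
  have h1 : ‖g w‖ ≤ 1 := by
    calc ‖g w‖ ≤ ‖g‖ * ‖w‖ := g.le_opNorm w
    _ ≤ 1 := by nlinarith [norm_nonneg g]
  rw [Real.norm_eq_abs, abs_le] at h1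
  exact h1

lemma geom_aux (n : ℕ) : ∑ l ∈ Finset.Icc 1 n, ((2:ℝ)⁻¹)^l ≤ 1 - ((2:ℝ)⁻¹)^n := by
  induction n with
  | zero => simp
  | succ m ih =>
    rw [Finset.sum_Icc_succ_top (by omega : 1 ≤ m + 1)]
    have h : ((2:ℝ)⁻¹)^(m+1) = ((2:ℝ)⁻¹)^m * 2⁻¹ := pow_succ _ _
    nlinarith [pow_nonneg (by norm_num : (0:ℝ) ≤ 2⁻¹) m]

lemma normalize_aux (u : X) (hu : ‖u‖ ≤ 1) (hne : u ≠ 0) :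
    ‖(‖u‖⁻¹ • u)‖ = 1 ∧ ∀ ψ : Dual ℝ X, 0 < ψ u → ψ u ≤ ψ (‖u‖⁻¹ • u) := by
  have h0 : 0 < ‖u‖ := norm_pos_iff.mpr hne
  have h1 : (1:ℝ) ≤ ‖u‖⁻¹ := by
    rw [le_inv_comm₀ one_pos h0]
    simpa using hu
  constructor
  · rw [norm_smul, Real.norm_eq_abs, abs_inv, abs_of_pos h0, inv_mul_cancel₀ h0.ne']
  · intro ψ hψ
    rw [map_smul, smul_eq_mul]
    nlinarith

lemma norming_aux (φ : Dual ℝ X) (hφ : ‖φ‖ = 1) {δ : ℝ} (hδ : 0 < δ) :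
    ∃ y : X, ‖y‖ = 1 ∧ 1 - δ < φ y := by
  set δ' := min δ 2⁻¹ with hδ'
  have hδ'pos : 0 < δ' := lt_min hδ (by norm_num)
  have hr : (1 - δ' : ℝ) < ‖φ‖ := by rw [hφ]; linarith
  obtain ⟨u0, hu0lt, hu0⟩ := φ.exists_lt_apply_of_lt_opNorm hr
  set u := if 0 ≤ φ u0 then u0 else -u0 with hu
  have huval : 1 - δ' < φ u := by
    rw [hu]; split_ifs with h
    · rwa [Real.norm_eq_abs, abs_of_nonneg h] at hu0
    · rw [map_neg]
      rw [Real.norm_eq_abs, abs_of_neg (lt_of_not_ge h)] at hu0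
      linarith
  have hunorm : ‖u‖ ≤ 1 := by
    rw [hu]; split_ifs <;> simp [le_of_lt hu0lt]
  have hupos : 0 < φ u := by
    have : (0:ℝ) ≤ 1 - δ' := by
      have : δ' ≤ 2⁻¹ := min_le_right _ _
      linarith
    linarith
  have hne : u ≠ 0 := by
    intro h
    rw [h, map_zero] at hupos
    exact lt_irrefl _ hupos
  obtain ⟨hynorm, hmono⟩ := normalize_aux u hunorm hne
  refine ⟨‖u‖⁻¹ • u, hynorm, ?_⟩
  have := hmono φ hupos
  have hle : δ' ≤ δ := min_le_left _ _
  linarith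


noncomputable def epsAux (η : ℝ) (k : ℕ) : ℝ := min (1 / (k:ℝ)) (η / 2 ^ (k + 4))

set_option maxHeartbeats 1000000 in
lemma step_aux (φ₀ : Dual ℝ X) (hφ₀ : ‖φ₀‖ = 1) (hΔ : IsWeakStarDeltaPoint φ₀)
    (x₀ : X) (hx₀ : ‖x₀‖ = 1) {β η : ℝ} (hβ0 : 0 < β) (hβ2 : β ≤ 2)
    (hηd : φ₀ x₀ = 1 - β + η) (hη0 : 0 < η) (hηβ : η ≤ β)
    (n : ℕ) (x : ℕ → X)
    (hx : ∀ l, 1 ≤ l → l ≤ n → ‖x l‖ = 1 ∧ 1 - η / 2 ^ (l + 4) < φ₀ (x l)) :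
    ∃ (g : Dual ℝ X) (y : X), ‖g‖ ≤ 1 ∧ ‖y‖ = 1 ∧
      1 - epsAux η (n+1) < φ₀ y ∧ 1 - (β - η / 2) < g x₀ ∧
      g y < -(1 - epsAux η (n+1)) ∧
      ∀ l, 1 ≤ l → l ≤ n → 1 - β / 2 < g (x l) := by
  have hη2 : η ≤ 2 := hηβ.trans hβ2
  set ε' := epsAux η (n+1) with hε'def
  have hn1pos : (0:ℝ) < ((n:ℝ) + 1) := by positivity
  have hcast : (((n+1 : ℕ)):ℝ) = (n:ℝ) + 1 := by push_cast; ring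
  have hε'pos : 0 < ε' := by
    rw [hε'def]
    unfold epsAux
    rw [hcast]
    apply lt_min
    · positivity
    · positivity
  have hε'le : ε' ≤ 1 := by
    rw [hε'def]
    unfold epsAux
    refine le_trans (min_le_left _ _) ?_
    rw [hcast, div_le_one hn1pos]
    linarith [Nat.cast_nonneg (α := ℝ) n]
  -- the aggregation vector
  set z := (4:ℝ)⁻¹ • x₀ + ∑ l ∈ Finset.Icc 1 n, x l with hzdef
  have hφz : φ₀ z = 4⁻¹ * φ₀ x₀ + ∑ l ∈ Finset.Icc 1 n, φ₀ (x l) := by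
    rw [hzdef, map_add, map_smul, map_sum, smul_eq_mul]
  have hcard : (Finset.Icc 1 n).card = n := by
    rw [Nat.card_Icc]; omega
  have hSφ : (n:ℝ) - η/16 ≤ ∑ l ∈ Finset.Icc 1 n, φ₀ (x l) := by
    have h1 : ∀ l ∈ Finset.Icc 1 n, 1 - (η/16) * ((2:ℝ)⁻¹)^l ≤ φ₀ (x l) := by
      intro l hl
      rw [Finset.mem_Icc] at hl
      have h2 := (hx l hl.1 hl.2).2
      have h3 : η / 2^(l+4) = η/16 * ((2:ℝ)⁻¹)^l := by
        rw [pow_add, inv_pow]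
        rw [div_eq_iff (by positivity)]
        field_simp
        ring_nf
      linarith [h3 ▸ h2]
    calc (n:ℝ) - η/16
        ≤ ∑ l ∈ Finset.Icc 1 n, (1 - η/16 * ((2:ℝ)⁻¹)^l) := by
          rw [Finset.sum_sub_distrib, Finset.sum_const, hcard, ← Finset.mul_sum]
          have hg := geom_aux n
          have hp : (0:ℝ) ≤ ((2:ℝ)⁻¹)^n := by positivity
          have : η/16 * ∑ l ∈ Finset.Icc 1 n, ((2:ℝ)⁻¹)^l ≤ η/16 * 1 := by
            apply mul_le_mul_of_nonneg_left _ (by linarith)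
            linarith
          simp only [nsmul_eq_mul, mul_one]
          linarith
      _ ≤ _ := Finset.sum_le_sum h1
  have hφzle : φ₀ z ≤ ‖z‖ := by
    calc φ₀ z ≤ |φ₀ z| := le_abs_self _
    _ = ‖φ₀ z‖ := (Real.norm_eq_abs _).symm
    _ ≤ ‖φ₀‖ * ‖z‖ := φ₀.le_opNorm z
    _ = ‖z‖ := by rw [hφ₀, one_mul]
  have htpos : 0 < ‖z‖ := by
    rcases Nat.eq_zero_or_pos n with h0 | h1
    · subst h0
      have : z = (4:ℝ)⁻¹ • x₀ := by
        rw [hzdef]; simp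
      rw [this, norm_smul, Real.norm_eq_abs, hx₀]
      norm_num
    · have hn1 : (1:ℝ) ≤ (n:ℝ) := by exact_mod_cast h1
      have hpos : 0 < φ₀ z := by
        rw [hφz, hηd]
        nlinarith
      linarith
  set t := ‖z‖ with htdef
  set γ := 1 - (φ₀ z - η/32)/t with hγdef
  have hγpos : 0 < γ := by
    have h1 : (φ₀ z - η/32)/t < 1 := (div_lt_one htpos).mpr (by linarith)
    rw [hγdef]; linarith
  have hvnorm : ‖t⁻¹ • z‖ = 1 := by
    rw [norm_smul, Real.norm_eq_abs, abs_inv, abs_of_pos htpos, ← htdef,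
      inv_mul_cancel₀ htpos.ne']
  have hφv : 1 - γ < φ₀ (t⁻¹ • z) := by
    rw [map_smul, smul_eq_mul, hγdef]
    have h1 : (φ₀ z - η/32)/t < φ₀ z / t := by
      apply div_lt_div_of_pos_right (by linarith) htpos
    rw [inv_mul_eq_div]
    linarith
  obtain ⟨g, hgnorm, hgv, hgfar⟩ := hΔ (t⁻¹ • z) γ hvnorm hγpos hφv (ε'/2) (by positivity)
  have hgz : φ₀ z - η/32 < g z := by
    rw [map_smul, smul_eq_mul, hγdef, inv_mul_eq_div] at hgv
    have h1 : (φ₀ z - η/32)/t < g z / t := by linarith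
    exact (div_lt_div_iff_of_pos_right htpos).mp h1
  -- obtain the far vector u and normalize
  have hfar' : (2 - ε' : ℝ) < ‖φ₀ - g‖ := lt_of_lt_of_le (by linarith) hgfar
  obtain ⟨u0, hu0lt, hu0⟩ := (φ₀ - g).exists_lt_apply_of_lt_opNorm hfar'
  set u := if 0 ≤ (φ₀ - g) u0 then u0 else -u0 with hudef
  have huval : 2 - ε' < (φ₀ - g) u := by
    rw [hudef]; split_ifs with h
    · rwa [Real.norm_eq_abs, abs_of_nonneg h] at hu0
    · rw [map_neg]
      rw [Real.norm_eq_abs, abs_of_neg (lt_of_not_ge h)] at hu0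
      linarith
  have hunorm : ‖u‖ ≤ 1 := by
    rw [hudef]; split_ifs <;> simp [le_of_lt hu0lt]
  have hsubu : (φ₀ - g) u = φ₀ u - g u := by
    rw [ContinuousLinearMap.sub_apply]
  have hgub := dual_bound g hgnorm u hunorm
  have hφub := dual_bound φ₀ (le_of_eq hφ₀) u hunorm
  have hφu : 1 - ε' < φ₀ u := by rw [hsubu] at huval; linarith [hgub.1]
  have hgu : g u < -(1 - ε') := by rw [hsubu] at huval; linarith [hφub.2]
  have hφupos : 0 < φ₀ u := by linarith
  have hune : u ≠ 0 := by
    intro h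
    rw [h, map_zero] at hφupos
    exact lt_irrefl _ hφupos
  obtain ⟨hynorm, hmono⟩ := normalize_aux u hunorm hune
  set y := ‖u‖⁻¹ • u with hydef
  have hφy : 1 - ε' < φ₀ y := lt_of_lt_of_le hφu (hmono φ₀ hφupos)
  have hgy : g y < -(1 - ε') := by
    have h1 : 0 < (-g) u := by
      rw [ContinuousLinearMap.neg_apply]
      linarith
    have h2 := hmono (-g) h1
    rw [ContinuousLinearMap.neg_apply, ContinuousLinearMap.neg_apply] at h2
    linarith
  -- slice consequences
  have hterm : ∀ l ∈ Finset.Icc 1 n, g (x l) ≤ 1 := by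
    intro l hl
    rw [Finset.mem_Icc] at hl
    exact (dual_bound g hgnorm (x l) (le_of_eq (hx l hl.1 hl.2).1)).2
  have hSg : ∑ l ∈ Finset.Icc 1 n, g (x l) ≤ (n:ℝ) := by
    calc ∑ l ∈ Finset.Icc 1 n, g (x l) ≤ ∑ _l ∈ Finset.Icc 1 n, (1:ℝ) :=
      Finset.sum_le_sum hterm
    _ = n := by rw [Finset.sum_const, hcard, nsmul_eq_mul, mul_one]
  have hgzex : g z = 4⁻¹ * g x₀ + ∑ l ∈ Finset.Icc 1 n, g (x l) := by
    rw [hzdef, map_add, map_smul, map_sum, smul_eq_mul]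
  have hgx₀b := dual_bound g hgnorm x₀ (le_of_eq hx₀)
  have hgx₀ : 1 - (β - η / 2) < g x₀ := by
    have h1 : 4⁻¹ * g x₀ > 4⁻¹ * φ₀ x₀ - η/16 - η/32 := by
      rw [hφz] at hgz
      linarith [hSg, hSφ, hgzex]
    rw [hηd] at h1
    linarith
  refine ⟨g, y, hgnorm, hynorm, hφy, hgx₀, hgy, ?_⟩
  intro j hj1 hjn
  have hjmem : j ∈ Finset.Icc 1 n := Finset.mem_Icc.mpr ⟨hj1, hjn⟩
  have hsplit : ∑ l ∈ Finset.Icc 1 n, g (x l)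
      = g (x j) + ∑ l ∈ (Finset.Icc 1 n).erase j, g (x l) :=
    (Finset.add_sum_erase _ _ hjmem).symm
  have hn1 : 1 ≤ n := hj1.trans hjn
  have herase_le : ∑ l ∈ (Finset.Icc 1 n).erase j, g (x l) ≤ (n:ℝ) - 1 := by
    calc ∑ l ∈ (Finset.Icc 1 n).erase j, g (x l)
        ≤ ∑ _l ∈ (Finset.Icc 1 n).erase j, (1:ℝ) :=
          Finset.sum_le_sum (fun l hl => hterm l (Finset.mem_of_mem_erase hl))
      _ = ((n:ℝ) - 1) := by
          rw [Finset.sum_const, Finset.card_erase_of_mem hjmem, hcard, nsmul_eq_mul, mul_one,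
            Nat.cast_sub hn1, Nat.cast_one]
  have key : g (x j) > φ₀ z - η/32 - 4⁻¹ * g x₀ - ((n:ℝ) - 1) := by
    rw [hgzex] at hgz
    linarith [hsplit.le, hsplit.ge]
  rw [hφz, hηd] at key
  linarith [hgx₀b.2, hSφ]


/-- The per-index invariant. -/
def PropAt (φ₀ : Dual ℝ X) (x₀ : X) (β η : ℝ) (k : ℕ) (s : ℕ → Dual ℝ X × X) : Prop :=
  ‖(s k).1‖ ≤ 1 ∧ ‖(s k).2‖ = 1 ∧ 1 - epsAux η k < φ₀ (s k).2 ∧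
  1 - (β - η / 2) < (s k).1 x₀ ∧ (s k).1 (s k).2 < -(1 - epsAux η k) ∧
  ∀ l, 1 ≤ l → l < k → 1 - β / 2 < (s k).1 ((s l).2)

lemma propAt_congr {φ₀ : Dual ℝ X} {x₀ : X} {β η : ℝ} {k : ℕ}
    {s s' : ℕ → Dual ℝ X × X} (h : ∀ j, j ≤ k → s' j = s j)
    (hP : PropAt φ₀ x₀ β η k s) : PropAt φ₀ x₀ β η k s' := by
  unfold PropAt at *
  rw [h k le_rfl]
  refine ⟨hP.1, hP.2.1, hP.2.2.1, hP.2.2.2.1, hP.2.2.2.2.1, fun l hl hlk => ?_⟩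
  rw [h l (le_of_lt (hlk.trans_le le_rfl))]
  exact hP.2.2.2.2.2 l hl hlk

open Classical in
noncomputable def nextPair (φ₀ : Dual ℝ X) (x₀ : X) (β η : ℝ) (n : ℕ)
    (s : ℕ → Dual ℝ X × X) : Dual ℝ X × X :=
  if h : ∃ p : Dual ℝ X × X, PropAt φ₀ x₀ β η (n+1) (Function.update s (n+1) p)
  then h.choose else (φ₀, x₀)

noncomputable def buildSeq (φ₀ : Dual ℝ X) (x₀ : X) (β η : ℝ) : ℕ → ℕ → Dual ℝ X × X
  | 0 => fun _ => (φ₀, x₀)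
  | (n+1) => Function.update (buildSeq φ₀ x₀ β η n) (n+1)
      (nextPair φ₀ x₀ β η n (buildSeq φ₀ x₀ β η n))

lemma buildSeq_agree (φ₀ : Dual ℝ X) (x₀ : X) (β η : ℝ) :
    ∀ j m k, m ≤ j → k ≤ m → buildSeq φ₀ x₀ β η j k = buildSeq φ₀ x₀ β η m k := by
  intro j
  induction j with
  | zero => intro m k hm hk; interval_cases m; rfl
  | succ j ih =>
    intro m k hm hk
    rcases Nat.eq_or_lt_of_le hm with h | h
    · rw [h]
    · have hmj : m ≤ j := by omega
      rw [show buildSeq φ₀ x₀ β η (j+1) k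
          = Function.update (buildSeq φ₀ x₀ β η j) (j+1)
            (nextPair φ₀ x₀ β η j (buildSeq φ₀ x₀ β η j)) k from rfl,
        Function.update_of_ne (by omega)]
      exact ih m k hmj hk

lemma buildSeq_zero_apply (φ₀ : Dual ℝ X) (x₀ : X) (β η : ℝ) (n : ℕ) :
    buildSeq φ₀ x₀ β η n 0 = (φ₀, x₀) := by
  induction n with
  | zero => rfl
  | succ n ih =>
    rw [show buildSeq φ₀ x₀ β η (n+1) 0
        = Function.update (buildSeq φ₀ x₀ β η n) (n+1)
          (nextPair φ₀ x₀ β η n (buildSeq φ₀ x₀ β η n)) 0 from rfl,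
      Function.update_of_ne (by omega)]
    exact ih

lemma buildSeq_propAt (φ₀ : Dual ℝ X) (hφ₀ : ‖φ₀‖ = 1) (hΔ : IsWeakStarDeltaPoint φ₀)
    (x₀ : X) (hx₀ : ‖x₀‖ = 1) {β η : ℝ} (hβ0 : 0 < β) (hβ2 : β ≤ 2)
    (hηd : φ₀ x₀ = 1 - β + η) (hη0 : 0 < η) (hηβ : η ≤ β) :
    ∀ n k, 1 ≤ k → k ≤ n → PropAt φ₀ x₀ β η k (buildSeq φ₀ x₀ β η n) := by
  intro n
  induction n with
  | zero => intro k h1 h2; omega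
  | succ n ih =>
    have hex : ∃ p : Dual ℝ X × X,
        PropAt φ₀ x₀ β η (n+1) (Function.update (buildSeq φ₀ x₀ β η n) (n+1) p) := by
      obtain ⟨g, y, hg1, hy1, hy2, hg2, hg3, hg4⟩ :=
        step_aux φ₀ hφ₀ hΔ x₀ hx₀ hβ0 hβ2 hηd hη0 hηβ n
          (fun l => (buildSeq φ₀ x₀ β η n l).2)
          (fun l hl1 hl2 => by
            have h := ih l hl1 hl2
            refine ⟨h.2.1, ?_⟩
            have hle : epsAux η l ≤ η / 2 ^ (l + 4) := min_le_right _ _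
            have := h.2.2.1
            show 1 - η / 2 ^ (l + 4) < φ₀ (buildSeq φ₀ x₀ β η n l).2
            linarith)
      refine ⟨(g, y), ?_⟩
      unfold PropAt
      rw [Function.update_self]
      refine ⟨hg1, hy1, hy2, hg2, hg3, fun l hl hlk => ?_⟩
      rw [Function.update_of_ne (by omega)]
      exact hg4 l hl (by omega)
    intro k hk1 hk2
    have hbs : buildSeq φ₀ x₀ β η (n+1)
        = Function.update (buildSeq φ₀ x₀ β η n) (n+1)
          (nextPair φ₀ x₀ β η n (buildSeq φ₀ x₀ β η n)) := rfl
    rcases Nat.lt_or_ge k (n+1) with h | h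
    · refine propAt_congr (fun j hj => ?_) (ih k hk1 (by omega))
      rw [hbs, Function.update_of_ne (by omega)]
    · have hk : k = n+1 := by omega
      subst hk
      rw [hbs]
      have hnp : nextPair φ₀ x₀ β η n (buildSeq φ₀ x₀ β η n) = hex.choose := by
        unfold nextPair
        rw [dif_pos hex]
      rw [hnp]
      exact hex.choose_spec

lemma opnorm_ge_of_apply {ψ : Dual ℝ X} {w : X} (hw : ‖w‖ = 1) {c : ℝ} (hc : c ≤ ψ w) :
    c ≤ ‖ψ‖ := by
  calc c ≤ ψ w := hc
  _ ≤ |ψ w| := le_abs_self _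
  _ = ‖ψ w‖ := (Real.norm_eq_abs _).symm
  _ ≤ ‖ψ‖ * ‖w‖ := ψ.le_opNorm w
  _ = ‖ψ‖ := by rw [hw, mul_one]

lemma epsAux_le {η : ℝ} (hη : 0 ≤ η) {k : ℕ} (hk : 1 ≤ k) : epsAux η k ≤ η / 32 := by
  refine le_trans (min_le_right _ _) ?_
  apply div_le_div_of_nonneg_left hη (by norm_num)
  calc (32:ℝ) = 2^5 := by norm_num
  _ ≤ 2^(k+4) := by
      apply pow_le_pow_right₀ (by norm_num)
      omega

lemma epsAux_le_inv {η : ℝ} {k : ℕ} : epsAux η k ≤ 1 / (k:ℝ) := min_le_left _ _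

/-- The main construction, for a suitably bounded slice parameter `β`. -/
lemma main_aux (φ₀ : Dual ℝ X) (hφ₀ : ‖φ₀‖ = 1) (hΔ : IsWeakStarDeltaPoint φ₀)
    (x₀ : X) (β : ℝ) (hx₀ : ‖x₀‖ = 1) (hβ0 : 0 < β) (hβ2 : β ≤ 2)
    (hmem : 1 - β < φ₀ x₀) :
    ∃ (φ : ℕ → Dual ℝ X) (x : ℕ → X),
      φ 0 = φ₀ ∧ x 0 = x₀ ∧
      (∀ i, 1 ≤ i → ‖φ i‖ ≤ 1 ∧ 1 - β < φ i x₀) ∧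
      (∀ i, 1 ≤ i → ‖x i‖ = 1 ∧ 1 - 1 / (i : ℝ) < φ₀ (x i)) ∧
      (∀ i j, i ≠ j → 2 - β ≤ ‖φ i - φ j‖) ∧
      (∀ i j, i ≠ j → 2 - β ≤ ‖x i - x j‖) := by
  set η := φ₀ x₀ - (1 - β) with hηdef
  have hηd : φ₀ x₀ = 1 - β + η := by rw [hηdef]; ring
  have hη0 : 0 < η := by rw [hηdef]; linarith
  have hφx₀le : φ₀ x₀ ≤ 1 := (dual_bound φ₀ (le_of_eq hφ₀) x₀ (le_of_eq hx₀)).2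
  have hηβ : η ≤ β := by rw [hηdef]; linarith
  set φ : ℕ → Dual ℝ X := fun i => (buildSeq φ₀ x₀ β η i i).1 with hφdef
  set x : ℕ → X := fun i => (buildSeq φ₀ x₀ β η i i).2 with hxdef
  have hf0 : buildSeq φ₀ x₀ β η 0 0 = (φ₀, x₀) := rfl
  have hP : ∀ k, 1 ≤ k → ‖φ k‖ ≤ 1 ∧ ‖x k‖ = 1 ∧ 1 - epsAux η k < φ₀ (x k) ∧
      1 - (β - η/2) < φ k x₀ ∧ φ k (x k) < -(1 - epsAux η k) ∧
      ∀ l, 1 ≤ l → l < k → 1 - β/2 < φ k (x l) := by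
    intro k hk
    have h := buildSeq_propAt φ₀ hφ₀ hΔ x₀ hx₀ hβ0 hβ2 hηd hη0 hηβ k k hk le_rfl
    unfold PropAt at h
    have hkk : buildSeq φ₀ x₀ β η k k = (φ k, x k) := rfl
    rw [hkk] at h
    refine ⟨h.1, h.2.1, h.2.2.1, h.2.2.2.1, h.2.2.2.2.1, fun l hl hlk => ?_⟩
    have hlk' : buildSeq φ₀ x₀ β η k l = buildSeq φ₀ x₀ β η l l :=
      buildSeq_agree φ₀ x₀ β η k l l (le_of_lt hlk) le_rfl
    have := h.2.2.2.2.2 l hl hlk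
    rw [hlk'] at this
    exact this
  have hε32 : ∀ k, 1 ≤ k → epsAux η k ≤ η / 32 := fun k hk => epsAux_le (le_of_lt hη0) hk
  refine ⟨φ, x, rfl, rfl, ?_, ?_, ?_, ?_⟩
  · intro i hi
    obtain ⟨h1, _, _, h4, _, _⟩ := hP i hi
    exact ⟨h1, by linarith⟩
  · intro i hi
    obtain ⟨_, h2, h3, _, _, _⟩ := hP i hi
    refine ⟨h2, ?_⟩
    have := epsAux_le_inv (η := η) (k := i)
    linarith
  · -- functional separation
    have key : ∀ i j, i < j → 2 - β ≤ ‖φ i - φ j‖ := by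
      intro i j hij
      have hj1 : 1 ≤ j := by omega
      obtain ⟨hφj, hxj, hφ₀xj, hφjx₀, hφjxj, hφjxl⟩ := hP j hj1
      have hεj := hε32 j hj1
      rcases Nat.eq_zero_or_pos i with h0 | h1
      · subst h0
        have hφ0 : φ 0 = φ₀ := rfl
        rw [hφ0]
        refine opnorm_ge_of_apply hxj ?_
        rw [ContinuousLinearMap.sub_apply]
        have : η ≤ β := hηβ
        linarith
      · obtain ⟨hφi, hxi, hφ₀xi, _, hφixi, _⟩ := hP i h1
        have hεi := hε32 i h1
        have hji := hφjxl i h1 hij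
        rw [norm_sub_rev]
        refine opnorm_ge_of_apply hxi ?_
        rw [ContinuousLinearMap.sub_apply]
        linarith
    intro i j hij
    rcases Nat.lt_or_ge i j with h | h
    · exact key i j h
    · have : j < i := by omega
      rw [norm_sub_rev]
      exact key j i this
  · -- vector separation
    have key : ∀ i j, i < j → 2 - β ≤ ‖x i - x j‖ := by
      intro i j hij
      have hj1 : 1 ≤ j := by omega
      obtain ⟨hφj, hxj, hφ₀xj, hφjx₀, hφjxj, hφjxl⟩ := hP j hj1
      have hεj := hε32 j hj1
      have hbound : φ j (x i - x j) ≤ ‖x i - x j‖ := by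
        calc φ j (x i - x j) ≤ |φ j (x i - x j)| := le_abs_self _
        _ = ‖φ j (x i - x j)‖ := (Real.norm_eq_abs _).symm
        _ ≤ ‖φ j‖ * ‖x i - x j‖ := (φ j).le_opNorm _
        _ ≤ 1 * ‖x i - x j‖ := by
            apply mul_le_mul_of_nonneg_right hφj (norm_nonneg _)
        _ = ‖x i - x j‖ := one_mul _
      rw [map_sub] at hbound
      rcases Nat.eq_zero_or_pos i with h0 | h1
      · subst h0
        have hx0 : x 0 = x₀ := rfl
        rw [hx0] at hbound ⊢
        linarith
      · have hji := hφjxl i h1 hij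
        linarith
    intro i j hij
    rcases Nat.lt_or_ge i j with h | h
    · exact key i j h
    · have : j < i := by omega
      rw [norm_sub_rev]
      exact key j i this


end Statement2Aux

open Statement2Aux in
/-- Proposition 2.3. If `x₀* ∈ S_{X*}` is a w*-Δ-point, then for every
w*-slice `S(x₀, α)` of `B_{X*}` containing `x₀*` there are sequences `(x_i*)_{i ≥ 1}` in
`S(x₀, α)` and `(x_i)_{i ≥ 1}` in `S_X` with `x₀*(x_i) > 1 - 1/i`, and, setting `x_0 = x₀`,
`x_0* = x₀*`, one has `‖x_i* - x_j*‖ ≥ 2 - α` and `‖x_i - x_j‖ ≥ 2 - α` for `i ≠ j`. -/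
theorem statement2 {X : Type*} [NormedAddCommGroup X] [NormedSpace ℝ X] [CompleteSpace X]
    (φ₀ : Dual ℝ X) (hφ₀ : ‖φ₀‖ = 1) (hΔ : IsWeakStarDeltaPoint φ₀)
    (x₀ : X) (α : ℝ) (hx₀ : ‖x₀‖ = 1) (hα : 0 < α) (hmem : 1 - α < φ₀ x₀) :
    ∃ (φ : ℕ → Dual ℝ X) (x : ℕ → X),
      φ 0 = φ₀ ∧ x 0 = x₀ ∧
      (∀ i, 1 ≤ i → ‖φ i‖ ≤ 1 ∧ 1 - α < φ i x₀) ∧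
      (∀ i, 1 ≤ i → ‖x i‖ = 1 ∧ 1 - 1 / (i : ℝ) < φ₀ (x i)) ∧
      (∀ i j, i ≠ j → 2 - α ≤ ‖φ i - φ j‖) ∧
      (∀ i j, i ≠ j → 2 - α ≤ ‖x i - x j‖) := by
  have hbd := dual_bound φ₀ (le_of_eq hφ₀) x₀ (le_of_eq hx₀)
  by_cases hα2 : α ≤ 2
  · exact main_aux φ₀ hφ₀ hΔ x₀ α hx₀ hα hα2 hmem
  · push_neg at hα2
    by_cases hb : -1 < φ₀ x₀
    · set β := 1 + (1 - φ₀ x₀) / 2 with hβdef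
      have hβ0 : 0 < β := by rw [hβdef]; linarith [hbd.2]
      have hβ2 : β ≤ 2 := by rw [hβdef]; linarith [hbd.1]
      have hβα : β ≤ α := by rw [hβdef]; linarith [hbd.1]
      have hmem' : 1 - β < φ₀ x₀ := by rw [hβdef]; linarith
      obtain ⟨φ, x, h0, h1, h2, h3, h4, h5⟩ :=
        main_aux φ₀ hφ₀ hΔ x₀ β hx₀ hβ0 hβ2 hmem'
      refine ⟨φ, x, h0, h1, fun i hi => ⟨(h2 i hi).1, by linarith [(h2 i hi).2]⟩, h3,
        fun i j hij => by linarith [h4 i j hij], fun i j hij => by linarith [h5 i j hij]⟩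
    · -- φ₀ x₀ = -1, α > 2 : trivial choices
      have hA : ∀ i : ℕ, 1 ≤ i → ∃ y : X, ‖y‖ = 1 ∧ 1 - 1/(i:ℝ) < φ₀ y := by
        intro i hi
        have : (0:ℝ) < 1/(i:ℝ) := by
          have : (0:ℝ) < (i:ℝ) := by exact_mod_cast hi
          positivity
        exact norming_aux φ₀ hφ₀ this
      set x : ℕ → X := fun i => if h : 1 ≤ i then (hA i h).choose else x₀ with hxdef
      refine ⟨fun _ => φ₀, x, rfl, by rw [hxdef]; simp, fun i hi => ⟨le_of_eq hφ₀, hmem⟩,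
        fun i hi => ?_, fun i j hij => ?_, fun i j hij => ?_⟩
      · have : x i = (hA i hi).choose := by rw [hxdef]; simp [hi]
        rw [this]
        exact (hA i hi).choose_spec
      · have : (2:ℝ) - α ≤ 0 := by linarith
        exact this.trans (norm_nonneg _)
      · have : (2:ℝ) - α ≤ 0 := by linarith
        exact this.trans (norm_nonneg _)
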